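/- Every almost discretely Lindelöf topological space is weakly linearly Lindelöf. -/

import Mathlib

open Set Topology Cardinal

universe u

/-- `x` is a complete accumulation point of the family `𝒰`: every open neighborhood
of `x` meets `#𝒰`-many members of `𝒰`. -/
def IsCompleteAccPt {X : Type u} [TopologicalSpace X] (𝒰 : Set (Set X)) (x : X) : Prop :=
  ∀ V : Set X, IsOpen V → x ∈ V → #↥{U ∈ 𝒰 | (U ∩ V).Nonempty} = #↥𝒰

/-- A space is weakly linearly Lindelöf if every family of nonempty open sets of
regular uncountable cardinality has a complete accumulation point. -/
def WeaklyLinearlyLindelof (X : Type u) [TopologicalSpace X] : Prop :=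
  ∀ 𝒰 : Set (Set X), (∀ U ∈ 𝒰, IsOpen U ∧ U.Nonempty) →
    (#↥𝒰).IsRegular → ℵ₀ < #↥𝒰 → ∃ x : X, IsCompleteAccPt 𝒰 x

/-- A space is almost discretely Lindelöf if every discrete subset is contained
in a Lindelöf subset. -/
def AlmostDiscretelyLindelof (X : Type u) [TopologicalSpace X] : Prop :=
  ∀ D : Set X, DiscreteTopology D → ∃ L : Set X, D ⊆ L ∧ IsLindelof L

/-- Every almost discretely Lindelöf space is weakly linearly Lindelöf. -/
theorem almostDiscretelyLindelof_weaklyLinearlyLindelof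
    (X : Type u) [TopologicalSpace X] (h : AlmostDiscretelyLindelof X) :
    WeaklyLinearlyLindelof X := by
  intro 𝒰 hop hreg hℵ0
  by_contra hcon
  push_neg at hcon
  set κ := #↥𝒰 with hκ
  -- every point has an open neighborhood meeting fewer than κ members of 𝒰
  have hV : ∀ x : X, ∃ V : Set X, IsOpen V ∧ x ∈ V ∧ #↥{U ∈ 𝒰 | (U ∩ V).Nonempty} < κ := by
    intro x
    have hx := hcon x
    rw [IsCompleteAccPt] at hx
    push_neg at hx
    obtain ⟨V, hVo, hxV, hne⟩ := hx
    exact ⟨V, hVo, hxV,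
      lt_of_le_of_ne (Cardinal.mk_le_mk_of_subset (sep_subset _ _)) hne⟩
  choose V hVo hxV hVs using hV
  -- Zorn: a maximal "separated" family of pairs (point, member of 𝒰 containing it)
  set P : Set (Set (X × Set X)) :=
    {s | (∀ p ∈ s, p.2 ∈ 𝒰 ∧ p.1 ∈ p.2) ∧
      ∀ p ∈ s, ∀ q ∈ s, p ≠ q → p.2 ∩ V q.1 = ∅ ∨ q.2 ∩ V p.1 = ∅} with hPdef
  have hzorn : ∀ c ⊆ P, IsChain (· ⊆ ·) c → ∃ ub ∈ P, ∀ s ∈ c, s ⊆ ub := by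
    intro c hcP hchain
    refine ⟨⋃₀ c, ⟨?_, ?_⟩, fun s hs => subset_sUnion_of_mem hs⟩
    · rintro p ⟨s, hs, hps⟩
      exact (hcP hs).1 p hps
    · rintro p ⟨s, hs, hps⟩ q ⟨t, ht, hqt⟩ hpq
      rcases hchain.total hs ht with hst | hts
      · exact (hcP ht).2 p (hst hps) q hqt hpq
      · exact (hcP hs).2 p hps q (hts hqt) hpq
  obtain ⟨M, hM⟩ := zorn_subset P hzorn
  have hmem : ∀ p ∈ M, p.2 ∈ 𝒰 ∧ p.1 ∈ p.2 := hM.prop.1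
  have hsep : ∀ p ∈ M, ∀ q ∈ M, p ≠ q → p.2 ∩ V q.1 = ∅ ∨ q.2 ∩ V p.1 = ∅ := hM.prop.2
  -- M has at least κ elements (else we could extend it)
  have hMbig : κ ≤ #↥M := by
    by_contra hlt
    push_neg at hlt
    have hBlt : #↥(⋃ m : ↥M, {U ∈ 𝒰 | (U ∩ V (m : X × Set X).1).Nonempty}) < κ := by
      rw [Cardinal.card_iUnion_lt_iff_forall_of_isRegular hreg hlt]
      intro m
      exact hVs _
    have hBsub : (⋃ m : ↥M, {U ∈ 𝒰 | (U ∩ V (m : X × Set X).1).Nonempty}) ⊆ 𝒰 :=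
      iUnion_subset fun m => sep_subset _ _
    have hns : ¬(𝒰 ⊆ ⋃ m : ↥M, {U ∈ 𝒰 | (U ∩ V (m : X × Set X).1).Nonempty}) :=
      fun hsub => absurd (Cardinal.mk_le_mk_of_subset hsub) (not_le.2 hBlt)
    obtain ⟨W, hW𝒰, hWB⟩ := not_subset.mp hns
    obtain ⟨w, hw⟩ := (hop W hW𝒰).2
    have hWV : ∀ p ∈ M, W ∩ V p.1 = ∅ := by
      intro p hp
      by_contra hne
      exact hWB (mem_iUnion.2 ⟨⟨p, hp⟩, hW𝒰, nonempty_iff_ne_empty.2 hne⟩)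
    have hnotM : (w, W) ∉ M := by
      intro hmem'
      have h0 := hWV _ hmem'
      have : w ∈ W ∩ V w := ⟨hw, hxV w⟩
      rw [h0] at this
      exact this
    have hM' : insert (w, W) M ∈ P := by
      constructor
      · rintro p (rfl | hp)
        · exact ⟨hW𝒰, hw⟩
        · exact hmem p hp
      · rintro p (rfl | hp) q (rfl | hq) hpq
        · exact absurd rfl hpq
        · exact Or.inl (hWV q hq)
        · exact Or.inr (hWV p hp)
        · exact hsep p hp q hq hpq
    exact hnotM (hM.2 hM' (subset_insert _ _) (mem_insert _ _))
  -- the set of first coordinates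
  set S := Prod.fst '' M with hSdef
  have hgex : ∀ x : X, ∃ U : Set X, x ∈ S → (x, U) ∈ M := by
    intro x
    by_cases hx : x ∈ S
    · obtain ⟨p, hp, hpx⟩ := hx
      refine ⟨p.2, fun _ => ?_⟩
      rw [← hpx]
      exact hp
    · exact ⟨∅, fun hx' => absurd hx' hx⟩
  choose g hgM using hgex
  have hg𝒰 : ∀ x ∈ S, g x ∈ 𝒰 := fun x hx => (hmem _ (hgM x hx)).1
  have hgmem : ∀ x ∈ S, x ∈ g x := fun x hx => (hmem _ (hgM x hx)).2
  -- first projection is injective on M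
  have hfstinj : InjOn Prod.fst M := by
    intro p hp q hq hpq
    by_contra hne
    rcases hsep p hp q hq hne with h0 | h0
    · have : p.1 ∈ p.2 ∩ V q.1 := ⟨(hmem p hp).2, by rw [← hpq]; exact hxV p.1⟩
      rw [h0] at this; exact this
    · have : q.1 ∈ q.2 ∩ V p.1 := ⟨(hmem q hq).2, by rw [hpq]; exact hxV q.1⟩
      rw [h0] at this; exact this
  -- g is injective on S
  have hginj : InjOn g S := by
    intro p hp q hq hpq
    by_contra hne
    have hneq : (p, g p) ≠ (q, g q) := fun he => hne (congrArg Prod.fst he)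
    rcases hsep _ (hgM p hp) _ (hgM q hq) hneq with h0 | h0
    · have : q ∈ g p ∩ V q := ⟨hpq ▸ hgmem q hq, hxV q⟩
      rw [h0] at this; exact this
    · have : p ∈ g q ∩ V p := ⟨hpq ▸ hgmem p hp, hxV p⟩
      rw [h0] at this; exact this
  -- S is discrete
  have hdisc : DiscreteTopology ↥S := by
    rw [discreteTopology_iff_isOpen_singleton]
    rintro ⟨x, hx⟩
    have hopen : IsOpen (g x ∩ V x) := ((hop _ (hg𝒰 x hx)).1).inter (hVo x)
    have heq : {(⟨x, hx⟩ : ↥S)} = (Subtype.val : ↥S → X) ⁻¹' (g x ∩ V x) := by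
      ext ⟨y, hy⟩
      simp only [mem_singleton_iff, mem_preimage, Subtype.mk.injEq]
      constructor
      · intro he
        rw [← he]
        exact ⟨hgmem y hy, hxV y⟩
      · rintro ⟨hy1, hy2⟩
        by_contra hne
        have hpairs : (x, g x) ≠ (y, g y) := fun he => hne (congrArg Prod.fst he).symm
        rcases hsep _ (hgM x hx) _ (hgM y hy) hpairs with h0 | h0
        · have : y ∈ g x ∩ V y := ⟨hy1, hxV y⟩
          rw [h0] at this; exact this
        · have : y ∈ g y ∩ V x := ⟨hgmem y hy, hy2⟩
          rw [h0] at this; exact this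
    rw [heq]
    exact hopen.preimage continuous_subtype_val
  -- get a Lindelöf superset and a countable subcover by the V's
  obtain ⟨L, hSL, hL⟩ := h S hdisc
  obtain ⟨r, hrc, hrcov⟩ := hL.elim_countable_subcover V hVo
    (fun x _ => mem_iUnion.2 ⟨x, hxV x⟩)
  have hrcard : #↥r < κ := lt_of_le_of_lt (mk_le_aleph0_iff.2 hrc.to_subtype) hℵ0
  -- κ ≤ #S
  have hScard : κ ≤ #↥S := by
    rw [hSdef, Cardinal.mk_image_eq_of_injOn _ _ hfstinj]
    exact hMbig
  -- S is covered by the countably many pieces S ∩ V x, x ∈ r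
  have hScover : S ⊆ ⋃ x : ↥r, (S ∩ V (x : X)) := by
    intro p hp
    obtain ⟨x, hxr, hpx⟩ := mem_iUnion₂.1 (hrcov (hSL hp))
    exact mem_iUnion.2 ⟨⟨x, hxr⟩, hp, hpx⟩
  -- so some piece has size at least κ
  have hbigpiece : ∃ x : ↥r, κ ≤ #↥(S ∩ V (x : X)) := by
    by_contra hall
    push_neg at hall
    have : #↥(⋃ x : ↥r, (S ∩ V (x : X))) < κ := by
      rw [Cardinal.card_iUnion_lt_iff_forall_of_isRegular hreg hrcard]
      exact hall
    exact absurd (hScard.trans (Cardinal.mk_le_mk_of_subset hScover)) (not_le.2 this)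
  obtain ⟨x, hxbig⟩ := hbigpiece
  -- but then V x meets κ-many members of 𝒰, contradiction
  have himg : g '' (S ∩ V (x : X)) ⊆ {U ∈ 𝒰 | (U ∩ V (x : X)).Nonempty} := by
    rintro _ ⟨p, ⟨hpS, hpV⟩, rfl⟩
    exact ⟨hg𝒰 p hpS, ⟨p, hgmem p hpS, hpV⟩⟩
  have : κ ≤ #↥{U ∈ 𝒰 | (U ∩ V (x : X)).Nonempty} := by
    calc κ ≤ #↥(S ∩ V (x : X)) := hxbig
      _ = #↥(g '' (S ∩ V (x : X))) :=
        (Cardinal.mk_image_eq_of_injOn _ _ (hginj.mono (inter_subset_left))).symm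
      _ ≤ _ := Cardinal.mk_le_mk_of_subset himg
  exact absurd this (not_le.2 (hVs (x : X)))
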